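/- (Semigroup property) For 0 < q < 1, p > -1, α, β > 0, x > 0, and f such that all iterated Jackson integrals converge absolutely, J^α_{p,q}(J^β_{p,q} f)(x) = J^{α+β}_{p,q} f(x). -/

import Mathlib

open scoped BigOperators

/-- Jackson q-integral ∫₀^b f d_q = (1-q) b ∑ q^i f(q^i b). -/
noncomputable def jackson (q b : ℝ) (f : ℝ → ℝ) : ℝ :=
  (1 - q) * b * ∑' i : ℕ, q ^ i * f (q ^ i * b)

/-- Jackson q-integral ∫_a^b. -/
noncomputable def jacksonI (q a b : ℝ) (f : ℝ → ℝ) : ℝ :=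
  jackson q b f - jackson q a f

/-- q-number [a]_q = (1-q^a)/(1-q). -/
noncomputable def qNum (q a : ℝ) : ℝ := (1 - q ^ a) / (1 - q)

/-- infinite q-Pochhammer (a;q)_∞. -/
noncomputable def qPochInf (a q : ℝ) : ℝ := ∏' j : ℕ, (1 - a * q ^ j)

/-- q-Gamma function Γ_q(t) = ((q;q)_∞/(q^t;q)_∞)(1-q)^{1-t}. -/
noncomputable def qGamma (q t : ℝ) : ℝ :=
  (qPochInf q q / qPochInf (q ^ t) q) * (1 - q) ^ (1 - t)

/-- q-exponential E_q(z) = ∏ (1 + (1-q) q^k z). -/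
noncomputable def qExpE (q z : ℝ) : ℝ := ∏' k : ℕ, (1 + (1 - q) * q ^ k * z)

/-- generalized Q-power (x - y)^{(γ)}_Q = x^γ (y/x;Q)_∞ / (Q^γ y/x;Q)_∞. -/
noncomputable def genPow (Q x y γ : ℝ) : ℝ :=
  x ^ γ * (qPochInf (y / x) Q / qPochInf (Q ^ γ * (y / x)) Q)

/-- q-derivative D_q h(x) = (h(x)-h(qx))/((1-q)x). -/
noncomputable def qDeriv (q : ℝ) (h : ℝ → ℝ) (x : ℝ) : ℝ :=
  (h x - h (q * x)) / ((1 - q) * x)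

/-- generalized q-fractional integral J^α_{p,q} (Rajković-type normalization). -/
noncomputable def Jfrac2 (q p α : ℝ) (f : ℝ → ℝ) (x : ℝ) : ℝ :=
  ((1 - q) ^ (α - 1) / genPow (q ^ (p + 1)) 1 (q ^ (p + 1)) (α - 1)) *
    jackson q x (fun w => w ^ p * f w *
      genPow (q ^ (p + 1)) (x ^ (p + 1)) ((w * q) ^ (p + 1)) (α - 1))

namespace JAux

noncomputable def P (Q a : ℝ) (n : ℕ) : ℝ := ∏ m ∈ Finset.range n, (1 - a * Q ^ m)

lemma P_zero (Q a : ℝ) : P Q a 0 = 1 := by simp [P]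
lemma P_succ (Q a : ℝ) (n : ℕ) : P Q a (n + 1) = P Q a n * (1 - a * Q ^ n) := by
  rw [P, Finset.prod_range_succ, P]

variable {Q : ℝ}

lemma Pq_ne (hne : ∀ m : ℕ, (1:ℝ) - Q * Q ^ m ≠ 0) (n : ℕ) : P Q Q n ≠ 0 :=
  Finset.prod_ne_zero_iff.2 fun m _ => hne m

/-- Gaussian binomial as a ratio. -/
noncomputable def gb (Q : ℝ) (n j : ℕ) : ℝ := P Q Q n / (P Q Q j * P Q Q (n - j))

lemma gb_zero (hne : ∀ m : ℕ, (1:ℝ) - Q * Q ^ m ≠ 0) (n : ℕ) : gb Q n 0 = 1 := by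
  rw [gb, P_zero, one_mul, Nat.sub_zero, div_self (Pq_ne hne n)]

lemma gb_self (hne : ∀ m : ℕ, (1:ℝ) - Q * Q ^ m ≠ 0) (n : ℕ) : gb Q n n = 1 := by
  rw [gb, Nat.sub_self, P_zero, mul_one, div_self (Pq_ne hne n)]

lemma gb_pascal (hne : ∀ m : ℕ, (1:ℝ) - Q * Q ^ m ≠ 0) (j c : ℕ) :
    gb Q (j + 1 + c) (j + 1) + Q ^ (c + 1) * gb Q (j + 1 + c) j
      = gb Q (j + 1 + c + 1) (j + 1) := by
  have h1 : j + 1 + c - (j + 1) = c := by omega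
  have h2 : j + 1 + c - j = c + 1 := by omega
  have h3 : j + 1 + c + 1 - (j + 1) = c + 1 := by omega
  rw [gb, gb, gb, h1, h2, h3]
  rw [P_succ Q Q (j + 1 + c), P_succ Q Q j, P_succ Q Q c]
  have hj := Pq_ne hne j
  have hc := Pq_ne hne c
  have hx := Pq_ne hne (j + 1 + c)
  have hfj := hne j
  have hfc := hne c
  have hfx := hne (j + 1 + c)
  field_simp
  ring_nf

section
variable {Q a : ℝ}

lemma fac_pos (hQ0 : 0 < Q) (hQ1 : Q < 1) (ha0 : 0 ≤ a) (ha1 : a < 1) (j : ℕ) :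
    0 < 1 - a * Q ^ j := by
  have h1 : Q ^ j ≤ 1 := pow_le_one₀ hQ0.le hQ1.le
  have h2 : a * Q ^ j ≤ a := by
    calc a * Q ^ j ≤ a * 1 := by nlinarith [pow_pos hQ0 j]
    _ = a := mul_one a
  linarith

lemma P_pos (hQ0 : 0 < Q) (hQ1 : Q < 1) (ha0 : 0 ≤ a) (ha1 : a < 1) (n : ℕ) :
    0 < P Q a n :=
  Finset.prod_pos fun m _ => fac_pos hQ0 hQ1 ha0 ha1 m

lemma P_le_one (hQ0 : 0 < Q) (hQ1 : Q < 1) (ha0 : 0 ≤ a) (ha1 : a < 1) (n : ℕ) :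
    P Q a n ≤ 1 := by
  refine Finset.prod_le_one (fun m _ => (fac_pos hQ0 hQ1 ha0 ha1 m).le) (fun m _ => ?_)
  have : 0 ≤ a * Q ^ m := mul_nonneg ha0 (pow_pos hQ0 m).le
  linarith

lemma log_summable (hQ0 : 0 < Q) (hQ1 : Q < 1) (ha0 : 0 ≤ a) (ha1 : a < 1) :
    Summable fun j : ℕ => Real.log (1 - a * Q ^ j) := by
  apply Summable.of_abs
  have hg : Summable fun j : ℕ => (a / (1 - a)) * Q ^ j :=
    (summable_geometric_of_lt_one hQ0.le hQ1).mul_left _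
  refine hg.of_nonneg_of_le (fun j => abs_nonneg _) (fun j => ?_)
  have hpos := fac_pos hQ0 hQ1 ha0 ha1 j
  have hle1 : 1 - a * Q ^ j ≤ 1 := by
    have : 0 ≤ a * Q ^ j := mul_nonneg ha0 (pow_pos hQ0 j).le
    linarith
  have hlog0 : Real.log (1 - a * Q ^ j) ≤ 0 := Real.log_nonpos (by linarith) hle1
  rw [abs_of_nonpos hlog0]
  have h2 : 1 - (1 - a * Q ^ j)⁻¹ ≤ Real.log (1 - a * Q ^ j) := by
    have := Real.log_le_sub_one_of_pos (inv_pos.2 hpos)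
    rw [Real.log_inv] at this; linarith
  have h3 : (1 - a * Q ^ j)⁻¹ - 1 ≤ a / (1 - a) * Q ^ j := by
    have he : (1 - a * Q ^ j)⁻¹ - 1 = (a * Q ^ j) / (1 - a * Q ^ j) := by
      field_simp
      ring
    have hQj : Q ^ j ≤ 1 := pow_le_one₀ hQ0.le hQ1.le
    have h1a : 1 - a ≤ 1 - a * Q ^ j := by nlinarith
    have hd : (a * Q ^ j) / (1 - a * Q ^ j) ≤ (a * Q ^ j) / (1 - a) :=
      div_le_div_of_nonneg_left (mul_nonneg ha0 (pow_pos hQ0 j).le) (by linarith) h1a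
    have he2 : (a * Q ^ j) / (1 - a) = a / (1 - a) * Q ^ j := by ring
    linarith
  linarith

lemma poch_eq_exp (hQ0 : 0 < Q) (hQ1 : Q < 1) (ha0 : 0 ≤ a) (ha1 : a < 1) :
    qPochInf a Q = Real.exp (∑' j : ℕ, Real.log (1 - a * Q ^ j)) := by
  have := Real.rexp_tsum_eq_tprod (f := fun j => 1 - a * Q ^ j)
    (fun j => fac_pos hQ0 hQ1 ha0 ha1 j) (log_summable hQ0 hQ1 ha0 ha1)
  exact this.symm

lemma poch_pos (hQ0 : 0 < Q) (hQ1 : Q < 1) (ha0 : 0 ≤ a) (ha1 : a < 1) :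
    0 < qPochInf a Q := by
  rw [poch_eq_exp hQ0 hQ1 ha0 ha1]; exact Real.exp_pos _

lemma poch_le_one (hQ0 : 0 < Q) (hQ1 : Q < 1) (ha0 : 0 ≤ a) (ha1 : a < 1) :
    qPochInf a Q ≤ 1 := by
  rw [poch_eq_exp hQ0 hQ1 ha0 ha1, Real.exp_le_one_iff]
  apply tsum_nonpos
  intro j
  have : 0 ≤ a * Q ^ j := mul_nonneg ha0 (pow_pos hQ0 j).le
  exact Real.log_nonpos (by linarith [fac_pos hQ0 hQ1 ha0 ha1 j]) (by linarith)

lemma poch_multipliable (hQ0 : 0 < Q) (hQ1 : Q < 1) (ha0 : 0 ≤ a) (ha1 : a < 1) :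
    Multipliable fun j : ℕ => 1 - a * Q ^ j :=
  Real.multipliable_of_summable_log (f := fun j => 1 - a * Q ^ j)
    (fun j => fac_pos hQ0 hQ1 ha0 ha1 j) (log_summable hQ0 hQ1 ha0 ha1)

lemma poch_factor (hQ0 : 0 < Q) (hQ1 : Q < 1) (ha0 : 0 ≤ a) (ha1 : a < 1) (k : ℕ) :
    qPochInf a Q = P Q a k * qPochInf (a * Q ^ k) Q := by
  have hak0 : 0 ≤ a * Q ^ k := mul_nonneg ha0 (pow_pos hQ0 k).le
  have haQk : a * Q ^ k < 1 := by
    have h1 : Q ^ k ≤ 1 := pow_le_one₀ hQ0.le hQ1.le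
    nlinarith [pow_pos hQ0 k]
  have hm : Multipliable fun n : ℕ => (1 : ℝ) - a * Q ^ (n + k) := by
    have := poch_multipliable hQ0 hQ1 hak0 haQk
    refine this.congr fun n => ?_
    rw [pow_add]; ring
  have := Multipliable.prod_mul_tprod_nat_mul' (f := fun j : ℕ => (1:ℝ) - a * Q ^ j) (k := k) hm
  rw [qPochInf, ← this, P, qPochInf]
  congr 1
  exact tprod_congr fun n => by show 1 - a * Q ^ (n + k) = 1 - a * Q ^ k * Q ^ n
                                rw [pow_add]; ring
end

section
open Finset
variable {Q : ℝ}

lemma qVdm' (hne : ∀ m : ℕ, (1:ℝ) - Q * Q ^ m ≠ 0) (A B : ℝ) (n : ℕ) :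
    ∑ j ∈ range (n + 1), B ^ j * P Q A j * P Q B (n - j) * gb Q n j = P Q (A * B) n := by
  induction n with
  | zero => simp [P_zero, gb_zero hne 0]
  | succ n IH =>
    have key : (1 - A * B * Q ^ n) *
        (∑ j ∈ range (n + 1), B ^ j * P Q A j * P Q B (n - j) * gb Q n j)
        = (∑ j ∈ range (n + 1), B ^ j * P Q A j * P Q B (n + 1 - j) * gb Q n j)
          + ∑ j ∈ range (n + 1),
              B ^ (j + 1) * P Q A (j + 1) * P Q B (n - j) * (Q ^ (n - j) * gb Q n j) := by
      rw [Finset.mul_sum, ← Finset.sum_add_distrib]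
      refine Finset.sum_congr rfl fun j hj => ?_
      have hjn : j ≤ n := Nat.lt_succ_iff.1 (Finset.mem_range.1 hj)
      have hnj : n + 1 - j = (n - j) + 1 := by omega
      have hq : Q ^ (n - j) * Q ^ j = Q ^ n := by rw [← pow_add]; congr 1; omega
      rw [hnj, P_succ Q B (n - j), P_succ Q A j, ← hq]
      ring
    rw [IH] at key
    have hmid : ∀ j ∈ range n,
        (fun i => B ^ i * P Q A i * P Q B (n + 1 - i) * gb Q (n + 1) i) (j + 1)
        = (fun i => B ^ i * P Q A i * P Q B (n + 1 - i) * gb Q n i) (j + 1)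
          + B ^ (j + 1) * P Q A (j + 1) * P Q B (n - j) * (Q ^ (n - j) * gb Q n j) := by
      intro j hj
      have hjn : j < n := Finset.mem_range.1 hj
      have hp : gb Q n (j + 1) + Q ^ (n - j) * gb Q n j = gb Q (n + 1) (j + 1) := by
        have h := gb_pascal hne j (n - 1 - j)
        have e1 : j + 1 + (n - 1 - j) = n := by omega
        have e2 : n - 1 - j + 1 = n - j := by omega
        rw [e1, e2] at h
        exact h
      have e3 : n + 1 - (j + 1) = n - j := by omega
      simp only [e3, ← hp]
      ring
    have G1 := Finset.sum_range_succ
      (fun i => B ^ i * P Q A i * P Q B (n + 1 - i) * gb Q (n + 1) i) (n + 1)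
    have G2 := Finset.sum_range_succ'
      (fun i => B ^ i * P Q A i * P Q B (n + 1 - i) * gb Q (n + 1) i) n
    have G3 := Finset.sum_range_succ'
      (fun i => B ^ i * P Q A i * P Q B (n + 1 - i) * gb Q n i) n
    have G4 := Finset.sum_range_succ
      (fun j => B ^ (j + 1) * P Q A (j + 1) * P Q B (n - j) * (Q ^ (n - j) * gb Q n j)) n
    have G5 : (∑ j ∈ range n,
          (fun i => B ^ i * P Q A i * P Q B (n + 1 - i) * gb Q (n + 1) i) (j + 1))
        = (∑ j ∈ range n,
            (fun i => B ^ i * P Q A i * P Q B (n + 1 - i) * gb Q n i) (j + 1))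
          + ∑ j ∈ range n,
              B ^ (j + 1) * P Q A (j + 1) * P Q B (n - j) * (Q ^ (n - j) * gb Q n j) := by
      rw [← Finset.sum_add_distrib]
      exact Finset.sum_congr rfl hmid
    have h0 : (fun i => B ^ i * P Q A i * P Q B (n + 1 - i) * gb Q (n + 1) i) 0
        = (fun i => B ^ i * P Q A i * P Q B (n + 1 - i) * gb Q n i) 0 := by
      simp only [gb_zero hne]
    have hlast : (fun i => B ^ i * P Q A i * P Q B (n + 1 - i) * gb Q (n + 1) i) (n + 1)
        = B ^ (n + 1) * P Q A (n + 1) * P Q B (n - n) * (Q ^ (n - n) * gb Q n n) := by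
      simp only [gb_self hne, Nat.sub_self, Nat.add_sub_cancel_left, pow_zero]
      ring
    have final : P Q (A * B) (n + 1) = (1 - A * B * Q ^ n) * P Q (A * B) n := by
      rw [P_succ]; ring
    simp only [] at G1 G2 G3 G4 G5 h0 hlast ⊢
    linarith [G1, G2, G3, G4, G5, h0, hlast, key, final]

lemma qVdm (hne : ∀ m : ℕ, (1:ℝ) - Q * Q ^ m ≠ 0) (A B : ℝ) (n : ℕ) :
    ∑ j ∈ range (n + 1), B ^ j * P Q A j * P Q B (n - j) / (P Q Q j * P Q Q (n - j))
      = P Q (A * B) n / P Q Q n := by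
  rw [eq_div_iff (Pq_ne hne n), Finset.sum_mul, ← qVdm' hne A B n]
  refine Finset.sum_congr rfl fun j hj => ?_
  rw [gb]
  have h1 := Pq_ne hne j
  have h2 := Pq_ne hne (n - j)
  field_simp
end

lemma pow_rpow {y : ℝ} (hy : 0 ≤ y) (i : ℕ) (r : ℝ) : ((y ^ i : ℝ)) ^ r = (y ^ r) ^ i := by
  rw [← Real.rpow_natCast y i, ← Real.rpow_mul hy, mul_comm, Real.rpow_mul hy,
    Real.rpow_natCast]

noncomputable def KK (q p γ : ℝ) : ℝ :=
  (1 - q) ^ (γ - 1) * (1 - q) * qPochInf ((q ^ (p+1)) ^ γ) (q ^ (p+1)) /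
    qPochInf (q ^ (p+1)) (q ^ (p+1))

noncomputable def aJ (q p γ : ℝ) (i : ℕ) : ℝ :=
  qPochInf ((q ^ (p+1)) ^ (i+1)) (q ^ (p+1)) /
    qPochInf ((q ^ (p+1)) ^ γ * (q ^ (p+1)) ^ i) (q ^ (p+1))

variable {q p : ℝ}

lemma eval (hq0 : 0 < q) (hq1 : q < 1) (hp : -1 < p) (γ : ℝ) (g : ℝ → ℝ) {x : ℝ}
    (hx : 0 < x) :
    Jfrac2 q p γ g x = KK q p γ * x ^ ((p+1) * γ)
      * ∑' i : ℕ, (q ^ (p+1)) ^ i * aJ q p γ i * g (q ^ i * x) := by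
  have hp1 : (0:ℝ) < p + 1 := by linarith
  set Q : ℝ := q ^ (p+1) with hQ
  have hQ0 : 0 < Q := Real.rpow_pos_of_pos hq0 _
  have hx1 : (0:ℝ) < x ^ (p+1) := Real.rpow_pos_of_pos hx _
  -- per-term rewrite
  have hterm : ∀ i : ℕ,
      q ^ i * ((q ^ i * x) ^ p * g (q ^ i * x) *
        genPow Q (x ^ (p+1)) (((q ^ i * x) * q) ^ (p+1)) (γ - 1))
      = (x ^ p * x ^ ((p+1) * (γ-1))) * (Q ^ i * aJ q p γ i * g (q ^ i * x)) := by
    intro i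
    have harg : ((q ^ i * x) * q) ^ (p+1) / x ^ (p+1) = Q ^ (i+1) := by
      rw [show (q ^ i * x) * q = q ^ (i+1) * x by ring]
      rw [Real.mul_rpow (pow_nonneg hq0.le _) hx.le, pow_rpow hq0.le (i+1) (p+1)]
      rw [mul_div_assoc, div_self hx1.ne', mul_one]
    have hQγ : Q ^ (γ - 1) * (Q:ℝ) ^ (i+1) = Q ^ γ * Q ^ i := by
      rw [pow_succ, show Q ^ (γ-1) * (Q ^ i * Q) = (Q ^ (γ-1) * Q ^ (1:ℝ)) * Q ^ i by
        rw [Real.rpow_one]; ring]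
      rw [← Real.rpow_add hQ0]
      norm_num
    have hwp : ((q ^ i * x) : ℝ) ^ p = (q ^ (p:ℝ)) ^ i * x ^ p := by
      rw [Real.mul_rpow (pow_nonneg hq0.le _) hx.le, pow_rpow hq0.le i p]
    have hsplit : (Q:ℝ) ^ i = q ^ i * (q ^ (p:ℝ)) ^ i := by
      rw [← mul_pow]
      congr 1
      rw [hQ, add_comm, Real.rpow_one_add' hq0.le (by linarith)]
    rw [genPow, harg, hQγ, hwp, ← Real.rpow_mul hx.le, aJ, ← hQ, hsplit]
    ring
  rw [Jfrac2, jackson, ← hQ, tsum_congr hterm, tsum_mul_left, genPow, Real.one_rpow,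
    div_one, one_mul]
  have hQγ2 : Q ^ (γ - 1) * Q = Q ^ γ := by
    nth_rewrite 2 [← Real.rpow_one Q]
    rw [← Real.rpow_add hQ0]; norm_num
  rw [hQγ2]
  have hxe : x * (x ^ p * x ^ ((p+1) * (γ-1))) = x ^ ((p+1) * γ) := by
    have e1 : x ^ ((1:ℝ) + p) = x ^ (1:ℝ) * x ^ p := Real.rpow_add hx _ _
    have e2 : x ^ (((1:ℝ) + p) + (p+1)*(γ-1)) = x ^ ((1:ℝ)+p) * x ^ ((p+1)*(γ-1)) :=
      Real.rpow_add hx _ _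
    have e3 : ((1:ℝ) + p) + (p+1)*(γ-1) = (p+1) * γ := by ring
    rw [← e3, e2, e1, Real.rpow_one]; ring
  rw [KK, ← hQ]
  have hpoch : qPochInf (Q ^ γ) Q ≠ 0 → qPochInf Q Q ≠ 0 → True := fun _ _ => trivial
  field_simp
  rw [show γ * (p+1) = (p+1) * γ by ring, ← hxe, show (γ-1) * (p+1) = (p+1) * (γ-1) by ring]
  ring


section
variable {q p : ℝ}

lemma aJ_eq (hq0 : 0 < q) (hq1 : q < 1) (hp : -1 < p) {γ : ℝ} (hγ : 0 < γ) (j : ℕ) :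
    aJ q p γ j = qPochInf (q ^ (p+1)) (q ^ (p+1)) * P (q ^ (p+1)) ((q ^ (p+1)) ^ γ) j /
      (P (q ^ (p+1)) (q ^ (p+1)) j * qPochInf ((q ^ (p+1)) ^ γ) (q ^ (p+1))) := by
  have hp1 : (0:ℝ) < p + 1 := by linarith
  set Q : ℝ := q ^ (p+1) with hQ
  have hQ0 : 0 < Q := Real.rpow_pos_of_pos hq0 _
  have hQ1 : Q < 1 := Real.rpow_lt_one hq0.le hq1 hp1
  have hγ0 : (0:ℝ) ≤ Q ^ γ := (Real.rpow_pos_of_pos hQ0 γ).le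
  have hγ1 : Q ^ γ < 1 := Real.rpow_lt_one hQ0.le hQ1 hγ
  have h1 := poch_factor hQ0 hQ1 hQ0.le hQ1 j
  have h2 := poch_factor hQ0 hQ1 hγ0 hγ1 j
  rw [show Q * Q ^ j = Q ^ (j+1) by rw [pow_succ]; ring] at h1
  have hP1 : P Q Q j ≠ 0 := (P_pos hQ0 hQ1 hQ0.le hQ1 j).ne'
  have hP2 : P Q (Q ^ γ) j ≠ 0 := (P_pos hQ0 hQ1 hγ0 hγ1 j).ne'
  have hpoch2 : qPochInf (Q ^ γ * Q ^ j) Q ≠ 0 := by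
    have hle1 : Q ^ j ≤ 1 := pow_le_one₀ hQ0.le hQ1.le
    have : Q ^ γ * Q ^ j < 1 := by nlinarith [Real.rpow_pos_of_pos hQ0 γ, pow_pos hQ0 j]
    exact (poch_pos hQ0 hQ1 (mul_nonneg hγ0 (pow_pos hQ0 j).le) this).ne'
  rw [aJ, ← hQ, h1, h2]
  field_simp

lemma star (hq0 : 0 < q) (hq1 : q < 1) (hp : -1 < p) {α β : ℝ} (hα : 0 < α) (hβ : 0 < β)
    (n : ℕ) :
    KK q p α * KK q p β *
      ∑ j ∈ Finset.range (n+1),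
        ((q ^ (p+1)) ^ β) ^ j * aJ q p α j * aJ q p β (n - j)
      = KK q p (α + β) * aJ q p (α+β) n := by
  have hp1 : (0:ℝ) < p + 1 := by linarith
  set Q : ℝ := q ^ (p+1) with hQ
  have hQ0 : 0 < Q := Real.rpow_pos_of_pos hq0 _
  have hQ1 : Q < 1 := Real.rpow_lt_one hq0.le hq1 hp1
  have hne : ∀ m : ℕ, (1:ℝ) - Q * Q ^ m ≠ 0 := fun m => (fac_pos hQ0 hQ1 hQ0.le hQ1 m).ne'
  have hab : (0:ℝ) < α + β := by linarith
  have hpow : ∀ γ : ℝ, 0 < γ → (0:ℝ) ≤ Q ^ γ ∧ Q ^ γ < 1 := fun γ hγ =>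
    ⟨(Real.rpow_pos_of_pos hQ0 γ).le, Real.rpow_lt_one hQ0.le hQ1 hγ⟩
  obtain ⟨hA0, hA1⟩ := hpow α hα
  obtain ⟨hB0, hB1⟩ := hpow β hβ
  obtain ⟨hAB0, hAB1⟩ := hpow _ hab
  have hcQ : qPochInf Q Q ≠ 0 := (poch_pos hQ0 hQ1 hQ0.le hQ1).ne'
  have hcA : qPochInf (Q ^ α) Q ≠ 0 := (poch_pos hQ0 hQ1 hA0 hA1).ne'
  have hcB : qPochInf (Q ^ β) Q ≠ 0 := (poch_pos hQ0 hQ1 hB0 hB1).ne'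
  have hcAB : qPochInf (Q ^ (α+β)) Q ≠ 0 := (poch_pos hQ0 hQ1 hAB0 hAB1).ne'
  have hPQ : ∀ m : ℕ, P Q Q m ≠ 0 := Pq_ne hne
  -- rewrite the sum
  have hsum : ∑ j ∈ Finset.range (n+1), ((Q:ℝ) ^ β) ^ j * aJ q p α j * aJ q p β (n - j)
      = (qPochInf Q Q)^2 / (qPochInf (Q ^ α) Q * qPochInf (Q ^ β) Q) *
          ∑ j ∈ Finset.range (n+1),
            (Q ^ β) ^ j * P Q (Q ^ α) j * P Q (Q ^ β) (n - j) /
              (P Q Q j * P Q Q (n - j)) := by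
    rw [Finset.mul_sum]
    refine Finset.sum_congr rfl fun j hj => ?_
    rw [aJ_eq hq0 hq1 hp hα j, aJ_eq hq0 hq1 hp hβ (n - j), ← hQ]
    have h1 := hPQ j
    have h2 := hPQ (n - j)
    field_simp
  rw [hsum, qVdm hne (Q ^ α) (Q ^ β) n]
  have hABQ : (Q:ℝ) ^ α * Q ^ β = Q ^ (α + β) := (Real.rpow_add hQ0 α β).symm
  rw [hABQ, aJ_eq hq0 hq1 hp hab n, KK, KK, KK, ← hQ]
  have h1q : (0:ℝ) < 1 - q := by linarith
  have hE : (1 - q) ^ (α - 1) * (1 - q) ^ (β - 1) * (1 - q) = (1 - q) ^ (α + β - 1) := by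
    rw [← Real.rpow_add h1q, ← Real.rpow_add_one h1q.ne']
    congr 1
    ring
  have hPQn := hPQ n
  rw [← hE]
  field_simp
end

end JAux

set_option maxHeartbeats 2000000

theorem Jfrac_semigroup (q p α β x : ℝ) (f : ℝ → ℝ)
    (hq0 : 0 < q) (hq1 : q < 1) (hp : -1 < p) (hα : 0 < α) (hβ : 0 < β) (hx : 0 < x)
    (hbd : ∃ C : ℝ, ∀ y ∈ Set.Ioc (0 : ℝ) x, |f y| ≤ C) :
    Jfrac2 q p α (fun y => Jfrac2 q p β f y) x = Jfrac2 q p (α + β) f x := by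
  classical
  obtain ⟨C, hC⟩ := hbd
  have hC0 : 0 ≤ C := le_trans (abs_nonneg _) (hC x ⟨hx, le_rfl⟩)
  have hp1 : (0:ℝ) < p + 1 := by linarith
  set Q : ℝ := q ^ (p+1) with hQ
  have hQ0 : 0 < Q := Real.rpow_pos_of_pos hq0 _
  have hQ1 : Q < 1 := Real.rpow_lt_one hq0.le hq1 hp1
  have hab : (0:ℝ) < α + β := by linarith
  have hpow : ∀ γ : ℝ, 0 < γ → (0:ℝ) ≤ Q ^ γ ∧ Q ^ γ < 1 := fun γ hγ =>
    ⟨(Real.rpow_pos_of_pos hQ0 γ).le, Real.rpow_lt_one hQ0.le hQ1 hγ⟩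
  -- bounds for aJ
  have haJpos : ∀ γ : ℝ, 0 < γ → ∀ i : ℕ, 0 < JAux.aJ q p γ i := by
    intro γ hγ i
    obtain ⟨hg0, hg1⟩ := hpow γ hγ
    have h1 : (0:ℝ) ≤ Q ^ (i+1) := (pow_pos hQ0 _).le
    have h2 : (Q:ℝ) ^ (i+1) < 1 := by
      have := pow_le_pow_of_le_one hQ0.le hQ1.le (show 1 ≤ i+1 by omega)
      rw [pow_one] at this; linarith
    have h3 : (0:ℝ) ≤ Q ^ γ * Q ^ i := mul_nonneg hg0 (pow_pos hQ0 _).le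
    have h4 : (Q:ℝ) ^ γ * Q ^ i < 1 := by
      have hi : (Q:ℝ) ^ i ≤ 1 := pow_le_one₀ hQ0.le hQ1.le
      nlinarith [pow_pos hQ0 i, Real.rpow_pos_of_pos hQ0 γ]
    exact div_pos (JAux.poch_pos hQ0 hQ1 h1 h2) (JAux.poch_pos hQ0 hQ1 h3 h4)
  have haJle : ∀ γ : ℝ, 0 < γ → ∀ i : ℕ,
      JAux.aJ q p γ i ≤ 1 / qPochInf (Q ^ γ) Q := by
    intro γ hγ i
    obtain ⟨hg0, hg1⟩ := hpow γ hγ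
    have h1 : (0:ℝ) ≤ Q ^ (i+1) := (pow_pos hQ0 _).le
    have h2 : (Q:ℝ) ^ (i+1) < 1 := by
      have := pow_le_pow_of_le_one hQ0.le hQ1.le (show 1 ≤ i+1 by omega)
      rw [pow_one] at this; linarith
    have h3 : (0:ℝ) ≤ Q ^ γ * Q ^ i := mul_nonneg hg0 (pow_pos hQ0 _).le
    have h4 : (Q:ℝ) ^ γ * Q ^ i < 1 := by
      have hi : (Q:ℝ) ^ i ≤ 1 := pow_le_one₀ hQ0.le hQ1.le
      nlinarith [pow_pos hQ0 i, Real.rpow_pos_of_pos hQ0 γ]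
    have hD : 0 < qPochInf (Q ^ γ * Q ^ i) Q := JAux.poch_pos hQ0 hQ1 h3 h4
    have hc : 0 < qPochInf (Q ^ γ) Q := JAux.poch_pos hQ0 hQ1 hg0 hg1
    have hcD : qPochInf (Q ^ γ) Q ≤ qPochInf (Q ^ γ * Q ^ i) Q := by
      have hfac := JAux.poch_factor hQ0 hQ1 hg0 hg1 i
      have hPle := JAux.P_le_one hQ0 hQ1 hg0 hg1 i
      have hPpos := JAux.P_pos hQ0 hQ1 hg0 hg1 i
      nlinarith
    have hN : qPochInf ((Q:ℝ) ^ (i+1)) Q ≤ 1 := JAux.poch_le_one hQ0 hQ1 h1 h2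
    have hN0 : 0 < qPochInf ((Q:ℝ) ^ (i+1)) Q := JAux.poch_pos hQ0 hQ1 h1 h2
    rw [JAux.aJ, ← hQ, div_le_div_iff₀ hD hc]
    nlinarith
  -- the double-indexed summand
  set T : ℕ × ℕ → ℝ := fun jk =>
    (Q ^ jk.1 * ((Q:ℝ) ^ β) ^ jk.1 * JAux.aJ q p α jk.1) *
      (Q ^ jk.2 * JAux.aJ q p β jk.2) * f (q ^ (jk.1 + jk.2) * x) with hTdef
  obtain ⟨hA0, hA1⟩ := hpow α hα
  obtain ⟨hB0, hB1⟩ := hpow β hβ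
  have hMα : 0 < qPochInf ((Q:ℝ) ^ α) Q := JAux.poch_pos hQ0 hQ1 hA0 hA1
  have hMβ : 0 < qPochInf ((Q:ℝ) ^ β) Q := JAux.poch_pos hQ0 hQ1 hB0 hB1
  set Mα : ℝ := 1 / qPochInf ((Q:ℝ) ^ α) Q with hMαdef
  set Mβ : ℝ := 1 / qPochInf ((Q:ℝ) ^ β) Q with hMβdef
  have hMα0 : 0 < Mα := by positivity
  have hMβ0 : 0 < Mβ := by positivity
  have hTsum : Summable T := by
    have hgeo : Summable fun i : ℕ => Q ^ i := summable_geometric_of_lt_one hQ0.le hQ1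
    have hmaj : Summable fun jk : ℕ × ℕ => (Mα * Mβ * C * Q ^ jk.1) * Q ^ jk.2 :=
      Summable.mul_of_nonneg (hgeo.mul_left _) hgeo
        (fun i => by positivity) (fun i => (pow_pos hQ0 i).le)
    apply Summable.of_abs
    refine hmaj.of_nonneg_of_le (fun jk => abs_nonneg _) (fun jk => ?_)
    obtain ⟨j, k⟩ := jk
    have hfb : |f (q ^ (j + k) * x)| ≤ C := by
      refine hC _ ⟨by positivity, ?_⟩
      have : (q:ℝ) ^ (j+k) ≤ 1 := pow_le_one₀ hq0.le hq1.le
      nlinarith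
    have ha1 : 0 < JAux.aJ q p α j := haJpos α hα j
    have ha2 : 0 < JAux.aJ q p β k := haJpos β hβ k
    have hb1 : JAux.aJ q p α j ≤ Mα := haJle α hα j
    have hb2 : JAux.aJ q p β k ≤ Mβ := haJle β hβ k
    have hBj : (0:ℝ) < ((Q:ℝ) ^ β) ^ j := pow_pos (Real.rpow_pos_of_pos hQ0 β) j
    have hBj1 : ((Q:ℝ) ^ β) ^ j ≤ 1 := pow_le_one₀ hB0 hB1.le
    have hQj : (0:ℝ) < Q ^ j := pow_pos hQ0 j
    have hQk : (0:ℝ) < Q ^ k := pow_pos hQ0 k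
    have habs : |T (j, k)| = (Q ^ j * ((Q:ℝ) ^ β) ^ j * JAux.aJ q p α j) *
        (Q ^ k * JAux.aJ q p β k) * |f (q ^ (j + k) * x)| := by
      rw [hTdef, abs_mul, abs_mul, abs_of_pos (by positivity), abs_of_pos (by positivity)]
    rw [habs]
    have h1 : (Q ^ j * ((Q:ℝ) ^ β) ^ j * JAux.aJ q p α j) ≤ Q ^ j * Mα := by
      have s1 : Q ^ j * ((Q:ℝ) ^ β) ^ j * JAux.aJ q p α j
          ≤ Q ^ j * ((Q:ℝ) ^ β) ^ j * Mα :=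
        mul_le_mul_of_nonneg_left hb1 (by positivity)
      have s2 : Q ^ j * ((Q:ℝ) ^ β) ^ j ≤ Q ^ j := by nlinarith
      nlinarith
    have h2 : (Q ^ k * JAux.aJ q p β k) ≤ Q ^ k * Mβ :=
      mul_le_mul_of_nonneg_left hb2 hQk.le
    have m1 : (Q ^ j * ((Q:ℝ) ^ β) ^ j * JAux.aJ q p α j) * (Q ^ k * JAux.aJ q p β k)
        ≤ (Q ^ j * Mα) * (Q ^ k * Mβ) :=
      mul_le_mul h1 h2 (by positivity) (by positivity)
    calc (Q ^ j * ((Q:ℝ) ^ β) ^ j * JAux.aJ q p α j) * (Q ^ k * JAux.aJ q p β k) *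
          |f (q ^ (j + k) * x)|
        ≤ ((Q ^ j * Mα) * (Q ^ k * Mβ)) * C :=
          mul_le_mul m1 hfb (abs_nonneg _) (by positivity)
      _ = Mα * Mβ * C * Q ^ j * Q ^ k := by ring
  -- rewrite both sides via eval
  rw [JAux.eval hq0 hq1 hp α (fun y => Jfrac2 q p β f y) hx,
      JAux.eval hq0 hq1 hp (α + β) f hx, ← hQ]
  -- rewrite each outer term using eval at q^j x
  have hstep : ∀ j : ℕ,
      Q ^ j * JAux.aJ q p α j * Jfrac2 q p β f (q ^ j * x)
        = (JAux.KK q p β * x ^ ((p+1) * β)) * ∑' k : ℕ, T (j, k) := by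
    intro j
    have hxj : 0 < q ^ j * x := by positivity
    rw [JAux.eval hq0 hq1 hp β f hxj, ← hQ]
    have hpw : ((q:ℝ) ^ j * x) ^ ((p+1) * β) = ((Q:ℝ) ^ β) ^ j * x ^ ((p+1) * β) := by
      rw [Real.mul_rpow (pow_nonneg hq0.le _) hx.le, JAux.pow_rpow hq0.le j ((p+1)*β),
        Real.rpow_mul hq0.le, ← hQ]
    have hinner : ∀ k : ℕ, Q ^ k * JAux.aJ q p β k * f (q ^ k * (q ^ j * x))
        = Q ^ k * JAux.aJ q p β k * f (q ^ (j + k) * x) := by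
      intro k
      rw [show (q:ℝ) ^ k * (q ^ j * x) = q ^ (j + k) * x by
        rw [← mul_assoc, ← pow_add, Nat.add_comm k j]]
    rw [tsum_congr hinner, hpw]
    have hTsplit : ∀ k : ℕ, T (j, k) = (Q ^ j * ((Q:ℝ) ^ β) ^ j * JAux.aJ q p α j) *
        (Q ^ k * JAux.aJ q p β k * f (q ^ (j + k) * x)) := by
      intro k; rw [hTdef]; ring
    rw [tsum_congr hTsplit, tsum_mul_left]
    ring
  rw [tsum_congr hstep, tsum_mul_left]
  -- double sum to antidiagonal
  have hswap : ∑' (j : ℕ), ∑' (k : ℕ), T (j, k) = ∑' p : ℕ × ℕ, T p :=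
    (Summable.tsum_prod' hTsum hTsum.prod_factor).symm
  have hsig : ∑' p : ℕ × ℕ, T p
      = ∑' n : ℕ, ∑ j ∈ Finset.range (n+1), T (j, n - j) := by
    rw [← Finset.HasAntidiagonal.sigmaAntidiagonalEquivProd.tsum_eq T]
    have hsg : Summable (fun c : (Σ n : ℕ, (Finset.HasAntidiagonal.antidiagonal n : Finset (ℕ × ℕ))) =>
        T (Finset.HasAntidiagonal.sigmaAntidiagonalEquivProd c)) :=
      Finset.HasAntidiagonal.sigmaAntidiagonalEquivProd.summable_iff.2 hTsum
    rw [Summable.tsum_sigma' (fun n => (hasSum_fintype _).summable) hsg]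
    refine tsum_congr fun n => ?_
    calc ∑' (c : (Finset.HasAntidiagonal.antidiagonal n : Finset (ℕ × ℕ))),
            T (Finset.HasAntidiagonal.sigmaAntidiagonalEquivProd ⟨n, c⟩)
        = ∑' (c : (Finset.HasAntidiagonal.antidiagonal n : Finset (ℕ × ℕ))), T c :=
          tsum_congr fun c => by simp [Finset.HasAntidiagonal.sigmaAntidiagonalEquivProd]
      _ = ∑ kl ∈ Finset.HasAntidiagonal.antidiagonal n, T kl := Finset.tsum_subtype _ T
      _ = ∑ j ∈ Finset.range (n+1), T (j, n - j) :=
          Finset.Nat.sum_antidiagonal_eq_sum_range_succ_mk T n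
  have hdiag : ∀ n : ℕ, ∑ j ∈ Finset.range (n+1), T (j, n - j)
      = (∑ j ∈ Finset.range (n+1),
          ((Q:ℝ) ^ β) ^ j * JAux.aJ q p α j * JAux.aJ q p β (n - j)) * (Q ^ n * f (q ^ n * x)) := by
    intro n
    rw [Finset.sum_mul]
    refine Finset.sum_congr rfl fun j hj => ?_
    have hjn : j ≤ n := Nat.lt_succ_iff.1 (Finset.mem_range.1 hj)
    have e1 : j + (n - j) = n := by omega
    have e2 : (Q:ℝ) ^ j * Q ^ (n - j) = Q ^ n := by rw [← pow_add]; congr 1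
    rw [hTdef]
    simp only [e1]
    rw [← e2]
    ring
  rw [hswap, hsig, tsum_congr hdiag]
  -- final: termwise star identity
  have hxE : x ^ ((p+1) * α) * x ^ ((p+1) * β) = x ^ ((p+1) * (α + β)) := by
    rw [← Real.rpow_add hx]; congr 1; ring
  have hfin : ∀ n : ℕ,
      JAux.KK q p α * x ^ ((p+1) * α) * (JAux.KK q p β * x ^ ((p+1) * β) *
        ((∑ j ∈ Finset.range (n+1),
          ((Q:ℝ) ^ β) ^ j * JAux.aJ q p α j * JAux.aJ q p β (n - j)) * (Q ^ n * f (q ^ n * x))))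
      = JAux.KK q p (α+β) * x ^ ((p+1) * (α+β)) * (Q ^ n * JAux.aJ q p (α+β) n * f (q ^ n * x)) := by
    intro n
    have hs := JAux.star hq0 hq1 hp hα hβ n
    rw [← hQ] at hs
    calc JAux.KK q p α * x ^ ((p+1) * α) * (JAux.KK q p β * x ^ ((p+1) * β) *
          ((∑ j ∈ Finset.range (n+1),
            ((Q:ℝ) ^ β) ^ j * JAux.aJ q p α j * JAux.aJ q p β (n - j)) * (Q ^ n * f (q ^ n * x))))
        = (JAux.KK q p α * JAux.KK q p β * ∑ j ∈ Finset.range (n+1),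
            ((Q:ℝ) ^ β) ^ j * JAux.aJ q p α j * JAux.aJ q p β (n - j)) *
            (x ^ ((p+1) * α) * x ^ ((p+1) * β)) * (Q ^ n * f (q ^ n * x)) := by ring
      _ = (JAux.KK q p (α+β) * JAux.aJ q p (α+β) n) * x ^ ((p+1) * (α+β)) *
            (Q ^ n * f (q ^ n * x)) := by rw [hs, hxE]
      _ = JAux.KK q p (α+β) * x ^ ((p+1) * (α+β)) *
            (Q ^ n * JAux.aJ q p (α+β) n * f (q ^ n * x)) := by ring
  rw [← tsum_mul_left, ← tsum_mul_left, ← tsum_mul_left]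
  exact tsum_congr hfin
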